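/- In the binary logit dyadic model, suppose there exist constants C ≥ 1 and ρ > 0 such that ‖R_{ij}‖ ≤ C and p_{ij} ≤ Cρ almost surely. Then there is a constant C' depending only on C such that ‖Σ1c‖ ≤ C'ρ², ‖Σ1p‖ ≤ C'ρ², ‖Σ2‖ ≤ C'ρ², and ‖Σ3‖ ≤ C'ρ (matrix norms), i.e. the Hajek-projection variance components are of order ρ² while the purely idiosyncratic component is of order ρ. -/

import Mathlib

open MeasureTheory ProbabilityTheory Filter
open scoped BigOperators NNReal Topology

namespace SparseNet

/-- Index type for the three independent families of the dyadic setup: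
consumer draws `(W_i, A_i)`, product draws `(X_j, B_j)` and idiosyncratic
draws `V_{ij}`. -/
abbrev Idx : Type := ℕ ⊕ ℕ ⊕ (ℕ × ℕ)

/-- Codomain of each member of the combined family. -/
def idxType (𝒲 𝒜 𝒳 ℬ 𝒱 : Type) : Idx → Type
  | Sum.inl _ => 𝒲 × 𝒜
  | Sum.inr (Sum.inl _) => 𝒳 × ℬ
  | Sum.inr (Sum.inr _) => 𝒱

/-- Measurable-space structure on the codomains. -/
def idxMS {𝒲 𝒜 𝒳 ℬ 𝒱 : Type} [MeasurableSpace 𝒲] [MeasurableSpace 𝒜]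
    [MeasurableSpace 𝒳] [MeasurableSpace ℬ] [MeasurableSpace 𝒱] :
    ∀ t : Idx, MeasurableSpace (idxType 𝒲 𝒜 𝒳 ℬ 𝒱 t)
  | Sum.inl _ => inferInstanceAs (MeasurableSpace (𝒲 × 𝒜))
  | Sum.inr (Sum.inl _) => inferInstanceAs (MeasurableSpace (𝒳 × ℬ))
  | Sum.inr (Sum.inr _) => inferInstanceAs (MeasurableSpace 𝒱)

/-- The combined family of random elements. -/
def fam {Ω 𝒲 𝒜 𝒳 ℬ 𝒱 : Type} (W : ℕ → Ω → 𝒲) (A : ℕ → Ω → 𝒜) (X : ℕ → Ω → 𝒳)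
    (B : ℕ → Ω → ℬ) (V : ℕ → ℕ → Ω → 𝒱) :
    ∀ t : Idx, Ω → idxType 𝒲 𝒜 𝒳 ℬ 𝒱 t
  | Sum.inl i => fun ω => (W i ω, A i ω)
  | Sum.inr (Sum.inl j) => fun ω => (X j ω, B j ω)
  | Sum.inr (Sum.inr ij) => V ij.1 ij.2

variable {Ω 𝒲 𝒜 𝒳 ℬ 𝒱 : Type} [MeasurableSpace Ω] [MeasurableSpace 𝒲]
  [MeasurableSpace 𝒜] [MeasurableSpace 𝒳] [MeasurableSpace ℬ] [MeasurableSpace 𝒱]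

/-- The dyadic setup: `(W_i, A_i)_{i≥1}` i.i.d., `(X_j, B_j)_{j≥1}` i.i.d.,
`(V_{ij})_{i,j≥1}` i.i.d., the three families mutually independent. -/
structure DyadicSetup (μ : Measure Ω) (W : ℕ → Ω → 𝒲) (A : ℕ → Ω → 𝒜)
    (X : ℕ → Ω → 𝒳) (B : ℕ → Ω → ℬ) (V : ℕ → ℕ → Ω → 𝒱) : Prop where
  measW : ∀ i, Measurable (W i)
  measA : ∀ i, Measurable (A i)
  measX : ∀ j, Measurable (X j)
  measB : ∀ j, Measurable (B j)
  measV : ∀ i j, Measurable (V i j)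
  indep : iIndepFun (m := idxMS) (fam W A X B V) μ
  identWA : ∀ i, IdentDistrib (fun ω => (W i ω, A i ω)) (fun ω => (W 1 ω, A 1 ω)) μ μ
  identXB : ∀ j, IdentDistrib (fun ω => (X j ω, B j ω)) (fun ω => (X 1 ω, B 1 ω)) μ μ
  identV : ∀ i j, IdentDistrib (V i j) (V 1 1) μ μ

variable (μ : Measure Ω) {k : ℕ}

/-- The logistic function `e(v) = exp(v)/(1 + exp(v))`. -/
noncomputable def logistic (v : ℝ) : ℝ := Real.exp v / (1 + Real.exp v)

/-- The binary outcome `Y_{ij} = h(W_i, X_j, A_i, B_j, V_{ij}) ∈ {0,1}`. -/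
def Yb (h : 𝒲 → 𝒳 → 𝒜 → ℬ → 𝒱 → ℝ) (W : ℕ → Ω → 𝒲) (A : ℕ → Ω → 𝒜)
    (X : ℕ → Ω → 𝒳) (B : ℕ → Ω → ℬ) (V : ℕ → ℕ → Ω → 𝒱) (i j : ℕ) : Ω → ℝ :=
  fun ω => h (W i ω) (X j ω) (A i ω) (B j ω) (V i j ω)

/-- The regressor vector `R_{ij} = (1, z(W_i, X_j)')'`. -/
def Rreg (z : 𝒲 → 𝒳 → Fin k → ℝ) (W : ℕ → Ω → 𝒲) (X : ℕ → Ω → 𝒳)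
    (i j : ℕ) : Ω → Fin (k + 1) → ℝ :=
  fun ω => Fin.cons 1 (z (W i ω) (X j ω))

/-- `e_{ij} = E[Y_{ij} | W_i, X_j]`. -/
noncomputable def eCEF (h : 𝒲 → 𝒳 → 𝒜 → ℬ → 𝒱 → ℝ) (W : ℕ → Ω → 𝒲)
    (A : ℕ → Ω → 𝒜) (X : ℕ → Ω → 𝒳) (B : ℕ → Ω → ℬ) (V : ℕ → ℕ → Ω → 𝒱)
    (i j : ℕ) : Ω → ℝ :=
  μ[Yb h W A X B V i j | MeasurableSpace.comap (fun ω => (W i ω, X j ω)) inferInstance]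

/-- `p_{ij} = E[Y_{ij} | W_i, X_j, A_i, B_j]`. -/
noncomputable def pCEF (h : 𝒲 → 𝒳 → 𝒜 → ℬ → 𝒱 → ℝ) (W : ℕ → Ω → 𝒲)
    (A : ℕ → Ω → 𝒜) (X : ℕ → Ω → 𝒳) (B : ℕ → Ω → ℬ) (V : ℕ → ℕ → Ω → 𝒱)
    (i j : ℕ) : Ω → ℝ :=
  μ[Yb h W A X B V i j |
    MeasurableSpace.comap (fun ω => (W i ω, X j ω, A i ω, B j ω)) inferInstance]

/-- The score `s_{ij} = (Y_{ij} − e_{ij}) R_{ij}`. -/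
noncomputable def scoreL (h : 𝒲 → 𝒳 → 𝒜 → ℬ → 𝒱 → ℝ) (z : 𝒲 → 𝒳 → Fin k → ℝ)
    (W : ℕ → Ω → 𝒲) (A : ℕ → Ω → 𝒜) (X : ℕ → Ω → 𝒳) (B : ℕ → Ω → ℬ)
    (V : ℕ → ℕ → Ω → 𝒱) (i j : ℕ) : Ω → Fin (k + 1) → ℝ :=
  fun ω a => (Yb h W A X B V i j ω - eCEF μ h W A X B V i j ω) * Rreg z W X i j ω a

/-- `s̄_{ij} = E[s_{ij} | W_i, X_j, A_i, B_j]`. -/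
noncomputable def sbarL (h : 𝒲 → 𝒳 → 𝒜 → ℬ → 𝒱 → ℝ) (z : 𝒲 → 𝒳 → Fin k → ℝ)
    (W : ℕ → Ω → 𝒲) (A : ℕ → Ω → 𝒜) (X : ℕ → Ω → 𝒳) (B : ℕ → Ω → ℬ)
    (V : ℕ → ℕ → Ω → 𝒱) (i j : ℕ) : Ω → Fin (k + 1) → ℝ :=
  μ[scoreL μ h z W A X B V i j |
    MeasurableSpace.comap (fun ω => (W i ω, X j ω, A i ω, B j ω)) inferInstance]

/-- `s̄c_i = E[s̄_{i1} | W_i, A_i]`. -/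
noncomputable def sbarcL (h : 𝒲 → 𝒳 → 𝒜 → ℬ → 𝒱 → ℝ) (z : 𝒲 → 𝒳 → Fin k → ℝ)
    (W : ℕ → Ω → 𝒲) (A : ℕ → Ω → 𝒜) (X : ℕ → Ω → 𝒳) (B : ℕ → Ω → ℬ)
    (V : ℕ → ℕ → Ω → 𝒱) (i : ℕ) : Ω → Fin (k + 1) → ℝ :=
  μ[sbarL μ h z W A X B V i 1 |
    MeasurableSpace.comap (fun ω => (W i ω, A i ω)) inferInstance]

/-- `s̄p_j = E[s̄_{1j} | X_j, B_j]`. -/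
noncomputable def sbarpL (h : 𝒲 → 𝒳 → 𝒜 → ℬ → 𝒱 → ℝ) (z : 𝒲 → 𝒳 → Fin k → ℝ)
    (W : ℕ → Ω → 𝒲) (A : ℕ → Ω → 𝒜) (X : ℕ → Ω → 𝒳) (B : ℕ → Ω → ℬ)
    (V : ℕ → ℕ → Ω → 𝒱) (j : ℕ) : Ω → Fin (k + 1) → ℝ :=
  μ[sbarL μ h z W A X B V 1 j |
    MeasurableSpace.comap (fun ω => (X j ω, B j ω)) inferInstance]

/-- The (cross-)covariance matrix `E[f h']` of two mean-zero random vectors. -/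
noncomputable def covMat {d : ℕ} (f h : Ω → Fin d → ℝ) : Matrix (Fin d) (Fin d) ℝ :=
  Matrix.of fun a b => ∫ ω, f ω a * h ω b ∂μ

/-- `Σ1c = E[s̄c_1 (s̄c_1)']`. -/
noncomputable def SigCL (h : 𝒲 → 𝒳 → 𝒜 → ℬ → 𝒱 → ℝ) (z : 𝒲 → 𝒳 → Fin k → ℝ)
    (W : ℕ → Ω → 𝒲) (A : ℕ → Ω → 𝒜) (X : ℕ → Ω → 𝒳) (B : ℕ → Ω → ℬ)
    (V : ℕ → ℕ → Ω → 𝒱) : Matrix (Fin (k + 1)) (Fin (k + 1)) ℝ :=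
  covMat μ (sbarcL μ h z W A X B V 1) (sbarcL μ h z W A X B V 1)

/-- `Σ1p = E[s̄p_1 (s̄p_1)']`. -/
noncomputable def SigPL (h : 𝒲 → 𝒳 → 𝒜 → ℬ → 𝒱 → ℝ) (z : 𝒲 → 𝒳 → Fin k → ℝ)
    (W : ℕ → Ω → 𝒲) (A : ℕ → Ω → 𝒜) (X : ℕ → Ω → 𝒳) (B : ℕ → Ω → ℬ)
    (V : ℕ → ℕ → Ω → 𝒱) : Matrix (Fin (k + 1)) (Fin (k + 1)) ℝ :=
  covMat μ (sbarpL μ h z W A X B V 1) (sbarpL μ h z W A X B V 1)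

/-- `Σ2 = E[s̄_{11} (s̄_{11})']`. -/
noncomputable def Sig2L (h : 𝒲 → 𝒳 → 𝒜 → ℬ → 𝒱 → ℝ) (z : 𝒲 → 𝒳 → Fin k → ℝ)
    (W : ℕ → Ω → 𝒲) (A : ℕ → Ω → 𝒜) (X : ℕ → Ω → 𝒳) (B : ℕ → Ω → ℬ)
    (V : ℕ → ℕ → Ω → 𝒱) : Matrix (Fin (k + 1)) (Fin (k + 1)) ℝ :=
  covMat μ (sbarL μ h z W A X B V 1 1) (sbarL μ h z W A X B V 1 1)

/-- `Σ3 = E[(s_{11} − s̄_{11})(s_{11} − s̄_{11})']`. -/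
noncomputable def Sig3L (h : 𝒲 → 𝒳 → 𝒜 → ℬ → 𝒱 → ℝ) (z : 𝒲 → 𝒳 → Fin k → ℝ)
    (W : ℕ → Ω → 𝒲) (A : ℕ → Ω → 𝒜) (X : ℕ → Ω → 𝒳) (B : ℕ → Ω → ℬ)
    (V : ℕ → ℕ → Ω → 𝒱) : Matrix (Fin (k + 1)) (Fin (k + 1)) ℝ :=
  covMat μ (fun ω => scoreL μ h z W A X B V 1 1 ω - sbarL μ h z W A X B V 1 1 ω)
    (fun ω => scoreL μ h z W A X B V 1 1 ω - sbarL μ h z W A X B V 1 1 ω)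

/-- Euclidean norm of a real vector. -/
noncomputable def euclNorm {m : ℕ} (v : Fin m → ℝ) : ℝ :=
  Real.sqrt (∑ a, (v a) ^ 2)


/-- Each coordinate of a vector is bounded by its Euclidean norm. -/
lemma abs_apply_le_euclNorm {m : ℕ} (v : Fin m → ℝ) (a : Fin m) : |v a| ≤ euclNorm v := by
  rw [euclNorm, ← Real.sqrt_sq_eq_abs]
  exact Real.sqrt_le_sqrt (Finset.single_le_sum (fun b _ => sq_nonneg (v b)) (Finset.mem_univ a))

/-- Conditional expectation of a `Fin d → ℝ`-valued function commutes with evaluation a.e. -/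
lemma condexp_apply_ae {Ω : Type} {m : MeasurableSpace Ω} [m0 : MeasurableSpace Ω]
    {μ : Measure Ω} [IsFiniteMeasure μ] (hm : m ≤ m0) {d : ℕ} {f : Ω → Fin d → ℝ}
    (hf : Integrable f μ) (a : Fin d) :
    (fun ω => (μ[f|m]) ω a) =ᵐ[μ] μ[fun ω => f ω a|m] := by
  classical
  let L : (Fin d → ℝ) →L[ℝ] ℝ := ContinuousLinearMap.proj a
  have hic : Integrable (μ[f|m]) μ := integrable_condExp
  have hsm : StronglyMeasurable[m] (μ[f|m]) := stronglyMeasurable_condExp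
  have hfa : Integrable (fun ω => f ω a) μ := L.integrable_comp hf
  refine ae_eq_condExp_of_forall_setIntegral_eq hm hfa (fun s _ _ => ?_) (fun s hs _ => ?_) ?_
  · exact (L.integrable_comp hic).integrableOn
  · have h1 : ∫ ω in s, L ((μ[f|m]) ω) ∂μ = L (∫ ω in s, (μ[f|m]) ω ∂μ) :=
      L.integral_comp_comm hic.integrableOn
    have h2 : ∫ ω in s, L (f ω) ∂μ = L (∫ ω in s, f ω ∂μ) :=
      L.integral_comp_comm hf.integrableOn
    have hLa : ∀ v : Fin d → ℝ, L v = v a := fun v => rfl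
    simp only [hLa] at h1 h2
    rw [h1, h2, setIntegral_condExp hm hf hs]
  · exact StronglyMeasurable.aestronglyMeasurable (L.continuous.comp_stronglyMeasurable hsm)

/-- A.e. bound for a real conditional expectation from an a.e. bound on the function. -/
lemma condexp_abs_le {Ω : Type} {m : MeasurableSpace Ω} [m0 : MeasurableSpace Ω]
    {μ : Measure Ω} {f g : Ω → ℝ} (hf : Integrable f μ) (hg : Integrable g μ)
    (h : ∀ᵐ ω ∂μ, |f ω| ≤ g ω) : ∀ᵐ ω ∂μ, |(μ[f|m]) ω| ≤ (μ[g|m]) ω := by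
  have h1 : μ[f|m] ≤ᵐ[μ] μ[g|m] :=
    condExp_mono hf hg (h.mono fun ω hω => (abs_le.1 hω).2)
  have h2 : μ[-g|m] ≤ᵐ[μ] μ[f|m] :=
    condExp_mono hg.neg hf (h.mono fun ω hω => (abs_le.1 hω).1)
  have h3 : μ[-g|m] =ᵐ[μ] -μ[g|m] := condExp_neg g m
  filter_upwards [h1, h2, h3] with ω e1 e2 e3
  rw [abs_le]
  refine ⟨?_, e1⟩
  rw [e3] at e2
  simpa using e2

/-- Bound on the integral of a product from a.e. bounds on the factors. -/
lemma integral_mul_le_const {Ω : Type} [MeasurableSpace Ω] {μ : Measure Ω}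
    [IsProbabilityMeasure μ] {f g : Ω → ℝ} {M N : ℝ}
    (hf : ∀ᵐ ω ∂μ, |f ω| ≤ M) (hg : ∀ᵐ ω ∂μ, |g ω| ≤ N) :
    |∫ ω, f ω * g ω ∂μ| ≤ M * N := by
  have hb : ∀ᵐ ω ∂μ, ‖f ω * g ω‖ ≤ M * N := by
    filter_upwards [hf, hg] with ω h1 h2
    rw [Real.norm_eq_abs, abs_mul]
    exact mul_le_mul h1 h2 (abs_nonneg _) ((abs_nonneg _).trans h1)
  calc |∫ ω, f ω * g ω ∂μ| = ‖∫ ω, f ω * g ω ∂μ‖ := (Real.norm_eq_abs _).symm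
    _ ≤ M * N * (μ Set.univ).toReal := norm_integral_le_of_norm_le_const hb
    _ = M * N := by simp

/-- in the binary logit dyadic model with `‖R_{ij}‖ ≤ C` and
`p_{ij} ≤ Cρ` a.s., there is a constant `C'` depending only on `C` with
`‖Σ1c‖ ≤ C'ρ²`, `‖Σ1p‖ ≤ C'ρ²`, `‖Σ2‖ ≤ C'ρ²` and `‖Σ3‖ ≤ C'ρ`
(entrywise, i.e. in the max matrix norm). -/
theorem statement6 (C : ℝ) (hC : 1 ≤ C) :
    ∃ C' : ℝ, 0 < C' ∧
      ∀ (Ω 𝒲 𝒜 𝒳 ℬ 𝒱 : Type) [MeasurableSpace Ω] [MeasurableSpace 𝒲]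
        [MeasurableSpace 𝒜] [MeasurableSpace 𝒳] [MeasurableSpace ℬ]
        [MeasurableSpace 𝒱] (μ : Measure Ω), IsProbabilityMeasure μ →
      ∀ (W : ℕ → Ω → 𝒲) (A : ℕ → Ω → 𝒜) (X : ℕ → Ω → 𝒳) (B : ℕ → Ω → ℬ)
        (V : ℕ → ℕ → Ω → 𝒱), DyadicSetup μ W A X B V →
      ∀ (k : ℕ) (h : 𝒲 → 𝒳 → 𝒜 → ℬ → 𝒱 → ℝ) (z : 𝒲 → 𝒳 → Fin k → ℝ),
        (Measurable fun p : 𝒲 × 𝒳 × 𝒜 × ℬ × 𝒱 =>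
          h p.1 p.2.1 p.2.2.1 p.2.2.2.1 p.2.2.2.2) →
        (Measurable fun p : 𝒲 × 𝒳 => z p.1 p.2) →
        (∀ w x a b v, h w x a b v = 0 ∨ h w x a b v = 1) →
      ∀ ρ : ℝ, 0 < ρ →
        (∀ i j : ℕ, ∀ᵐ ω ∂μ, euclNorm (Rreg z W X i j ω) ≤ C) →
        (∀ i j : ℕ, ∀ᵐ ω ∂μ, pCEF μ h W A X B V i j ω ≤ C * ρ) →
        (∀ a b, |SigCL μ h z W A X B V a b| ≤ C' * ρ ^ 2) ∧
        (∀ a b, |SigPL μ h z W A X B V a b| ≤ C' * ρ ^ 2) ∧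
        (∀ a b, |Sig2L μ h z W A X B V a b| ≤ C' * ρ ^ 2) ∧
        (∀ a b, |Sig3L μ h z W A X B V a b| ≤ C' * ρ) := by
  classical
  refine ⟨16 * C ^ 4, by positivity, ?_⟩
  intro Ω 𝒲 𝒜 𝒳 ℬ 𝒱 m0 mW mA mX mB mV μ hprob W A X B V hDS k h z hmeash hmeasz h01 ρ hρ
    hRbd hpbd
  have hCpos : (0 : ℝ) < C := lt_of_lt_of_le one_pos hC
  have hW := hDS.measW 1
  have hA := hDS.measA 1
  have hX := hDS.measX 1
  have hB := hDS.measB 1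
  have hV := hDS.measV 1 1
  set mG : MeasurableSpace Ω :=
    MeasurableSpace.comap (fun ω => (W 1 ω, X 1 ω, A 1 ω, B 1 ω)) inferInstance with hmGdef
  set mF : MeasurableSpace Ω :=
    MeasurableSpace.comap (fun ω => (W 1 ω, X 1 ω)) inferInstance with hmFdef
  set mC : MeasurableSpace Ω :=
    MeasurableSpace.comap (fun ω => (W 1 ω, A 1 ω)) inferInstance with hmCdef
  set mP : MeasurableSpace Ω :=
    MeasurableSpace.comap (fun ω => (X 1 ω, B 1 ω)) inferInstance with hmPdef
  letI : MeasurableSpace Ω := m0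
  have hmG : mG ≤ m0 := (hW.prodMk (hX.prodMk (hA.prodMk hB))).comap_le
  have hmF : mF ≤ m0 := (hW.prodMk hX).comap_le
  have hmC : mC ≤ m0 := (hW.prodMk hA).comap_le
  have hmP : mP ≤ m0 := (hX.prodMk hB).comap_le
  have hFG : mF ≤ mG := by
    rw [hmFdef, hmGdef]
    have h1 : (fun ω => (W 1 ω, X 1 ω))
        = (fun q : 𝒲 × 𝒳 × 𝒜 × ℬ => (q.1, q.2.1)) ∘
          (fun ω => (W 1 ω, X 1 ω, A 1 ω, B 1 ω)) := rfl
    rw [h1, ← MeasurableSpace.comap_comp]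
    exact MeasurableSpace.comap_mono
      (measurable_fst.prodMk (measurable_fst.comp measurable_snd)).comap_le
  -- the outcome
  set Y : Ω → ℝ := Yb h W A X B V 1 1 with hYdef
  have hYmeas : Measurable Y := by
    have hYc : Y = (fun q : 𝒲 × 𝒳 × 𝒜 × ℬ × 𝒱 => h q.1 q.2.1 q.2.2.1 q.2.2.2.1 q.2.2.2.2) ∘
        (fun ω => (W 1 ω, X 1 ω, A 1 ω, B 1 ω, V 1 1 ω)) := rfl
    rw [hYc]
    exact hmeash.comp (hW.prodMk (hX.prodMk (hA.prodMk (hB.prodMk hV))))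
  have hY01 : ∀ ω, Y ω = 0 ∨ Y ω = 1 := fun ω => h01 _ _ _ _ _
  have hY0 : ∀ ω, 0 ≤ Y ω := fun ω => by rcases hY01 ω with h' | h' <;> simp [h']
  have hY1 : ∀ ω, Y ω ≤ 1 := fun ω => by rcases hY01 ω with h' | h' <;> simp [h']
  have hYint : Integrable Y μ := by
    refine Integrable.mono' (integrable_const 1) hYmeas.aestronglyMeasurable ?_
    exact Filter.Eventually.of_forall fun ω => by
      rw [Real.norm_eq_abs, abs_of_nonneg (hY0 ω)]; exact hY1 ω
  -- the two conditional success probabilities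
  set p : Ω → ℝ := μ[Y|mG] with hpdef2
  set e : Ω → ℝ := μ[Y|mF] with hedef2
  have hpCEF : pCEF μ h W A X B V 1 1 = p := by rw [hpdef2, hmGdef, hYdef]; rfl
  have hpint : Integrable p μ := by rw [hpdef2]; exact integrable_condExp
  have heint : Integrable e μ := by rw [hedef2]; exact integrable_condExp
  have hp0 : ∀ᵐ ω ∂μ, 0 ≤ p ω := by
    have h1 : (0 : Ω → ℝ) ≤ᵐ[μ] μ[Y|mG] :=
      condExp_nonneg (Filter.Eventually.of_forall fun ω => hY0 ω)
    rw [hpdef2]; exact h1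
  have he0 : ∀ᵐ ω ∂μ, 0 ≤ e ω := by
    have h1 : (0 : Ω → ℝ) ≤ᵐ[μ] μ[Y|mF] :=
      condExp_nonneg (Filter.Eventually.of_forall fun ω => hY0 ω)
    rw [hedef2]; exact h1
  have hp1 : ∀ᵐ ω ∂μ, p ω ≤ 1 := by
    have h1 : μ[Y|mG] ≤ᵐ[μ] μ[(fun _ => (1:ℝ))|mG] :=
      condExp_mono hYint (integrable_const 1) (Filter.Eventually.of_forall fun ω => hY1 ω)
    have h2 : μ[(fun _ => (1:ℝ))|mG] = fun _ => (1:ℝ) := condExp_const hmG 1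
    rw [hpdef2]
    filter_upwards [h1] with ω hω
    rw [h2] at hω; exact hω
  have he1 : ∀ᵐ ω ∂μ, e ω ≤ 1 := by
    have h1 : μ[Y|mF] ≤ᵐ[μ] μ[(fun _ => (1:ℝ))|mF] :=
      condExp_mono hYint (integrable_const 1) (Filter.Eventually.of_forall fun ω => hY1 ω)
    have h2 : μ[(fun _ => (1:ℝ))|mF] = fun _ => (1:ℝ) := condExp_const hmF 1
    rw [hedef2]
    filter_upwards [h1] with ω hω
    rw [h2] at hω; exact hω
  have hpρ : ∀ᵐ ω ∂μ, p ω ≤ C * ρ := by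
    have := hpbd 1 1; rwa [hpCEF] at this
  have heρ : ∀ᵐ ω ∂μ, e ω ≤ C * ρ := by
    have htow : μ[p|mF] =ᵐ[μ] e := by
      rw [hpdef2, hedef2]; exact condExp_condExp_of_le hFG hmG
    have hmono : μ[p|mF] ≤ᵐ[μ] μ[(fun _ => C * ρ)|mF] :=
      condExp_mono hpint (integrable_const _) hpρ
    have hcc : μ[(fun _ => C * ρ)|mF] = fun _ => C * ρ := condExp_const hmF _
    filter_upwards [htow, hmono] with ω h1 h2
    rw [hcc] at h2; rw [← h1]; exact h2
  set q : ℝ := min 1 (C * ρ) with hqdef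
  have hq0 : 0 ≤ q := le_min zero_le_one (by positivity)
  have hqρ : q ≤ C * ρ := min_le_right _ _
  have hq1 : q ≤ 1 := min_le_left _ _
  have hpq : ∀ᵐ ω ∂μ, p ω ≤ q := by
    filter_upwards [hp1, hpρ] with ω a b; exact le_min a b
  have heq : ∀ᵐ ω ∂μ, e ω ≤ q := by
    filter_upwards [he1, heρ] with ω a b; exact le_min a b
  -- the regressor
  set R : Ω → Fin (k+1) → ℝ := Rreg z W X 1 1 with hRdef
  have hRa : ∀ᵐ ω ∂μ, ∀ a, |R ω a| ≤ C := by
    filter_upwards [hRbd 1 1] with ω hω a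
    exact (abs_apply_le_euclNorm _ a).trans hω
  have hRmeas : Measurable R := by
    rw [hRdef]
    refine measurable_pi_iff.2 fun a => ?_
    refine Fin.cases ?_ (fun i => ?_) a
    · simp only [Rreg, Fin.cons_zero]; exact measurable_const
    · simp only [Rreg, Fin.cons_succ]
      exact (measurable_pi_apply i).comp (hmeasz.comp (hW.prodMk hX))
  -- the score
  set s : Ω → Fin (k+1) → ℝ := scoreL μ h z W A X B V 1 1 with hsdef
  have hsEq : ∀ ω a, s ω a = (Y ω - e ω) * R ω a := fun ω a => rfl
  have heSM : StronglyMeasurable[m0] e := by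
    rw [hedef2]; exact stronglyMeasurable_condExp.mono hmF
  have hsmeas : Measurable s := by
    refine measurable_pi_iff.2 fun a => ?_
    have hc : (fun ω => s ω a) = fun ω => (Y ω - e ω) * R ω a := rfl
    rw [hc]
    exact (hYmeas.sub heSM.measurable).mul ((measurable_pi_apply a).comp hRmeas)
  have hsint : Integrable s μ := by
    refine Integrable.mono' (integrable_const (2 * C)) hsmeas.aestronglyMeasurable ?_
    filter_upwards [hRa, he0, he1] with ω h1 h2 h3
    rw [pi_norm_le_iff_of_nonneg (by positivity)]
    intro a
    have hYe : |Y ω - e ω| ≤ 2 := by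
      rw [abs_le]; constructor <;> nlinarith [hY0 ω, hY1 ω]
    calc ‖s ω a‖ = |Y ω - e ω| * |R ω a| := by rw [hsEq, Real.norm_eq_abs, abs_mul]
      _ ≤ 2 * C := mul_le_mul hYe (h1 a) (abs_nonneg _) (by norm_num)
  have hsa_int : ∀ a, Integrable (fun ω => s ω a) μ := fun a =>
    (ContinuousLinearMap.proj a : (Fin (k+1) → ℝ) →L[ℝ] ℝ).integrable_comp hsint
  have hsa_bd : ∀ a, ∀ᵐ ω ∂μ, |s ω a| ≤ C * (Y ω + e ω) := by
    intro a
    filter_upwards [hRa, he0] with ω h1 h2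
    rw [hsEq, abs_mul]
    have hYe : |Y ω - e ω| ≤ Y ω + e ω := by
      rw [abs_le]; constructor <;> nlinarith [hY0 ω]
    calc |Y ω - e ω| * |R ω a| ≤ (Y ω + e ω) * C :=
          mul_le_mul hYe (h1 a) (abs_nonneg _) (by nlinarith [hY0 ω])
      _ = C * (Y ω + e ω) := mul_comm _ _
  have hDint : Integrable (fun ω => C * (Y ω + e ω)) μ := (hYint.add heint).const_mul C
  have heSMF : StronglyMeasurable[mF] e := by
    rw [hedef2]; exact stronglyMeasurable_condExp
  have hcondD : ∀ᵐ ω ∂μ, (μ[fun ω' => C * (Y ω' + e ω')|mG]) ω = C * (p ω + e ω) := by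
    have h1 : (fun ω' => C * (Y ω' + e ω')) = C • (Y + e) := by
      funext ω'; simp [smul_eq_mul]
    have h2 : μ[C • (Y + e)|mG] =ᵐ[μ] C • μ[Y + e|mG] := condExp_smul C (Y + e) mG
    have h3 : μ[Y + e|mG] =ᵐ[μ] μ[Y|mG] + μ[e|mG] := condExp_add hYint heint mG
    have h4 : μ[e|mG] = e := condExp_of_stronglyMeasurable hmG (heSMF.mono hFG) heint
    rw [h1]
    filter_upwards [h2, h3] with ω e2 e3
    rw [show (μ[C • (Y + e)|mG]) ω = (C • μ[Y + e|mG]) ω from e2, Pi.smul_apply, smul_eq_mul,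
      show (μ[Y + e|mG]) ω = (μ[Y|mG] + μ[e|mG]) ω from e3, Pi.add_apply, h4, ← hpdef2]
  -- the conditional score
  set sb : Ω → Fin (k+1) → ℝ := sbarL μ h z W A X B V 1 1 with hsbdef
  have hsbEq : sb = μ[s|mG] := by rw [hsbdef, hsdef, hmGdef]; rfl
  have hsbint : Integrable sb μ := by rw [hsbEq]; exact integrable_condExp
  have hsbSM : StronglyMeasurable[m0] sb := by
    rw [hsbEq]; exact stronglyMeasurable_condExp.mono hmG
  have hsba_int : ∀ a, Integrable (fun ω => sb ω a) μ := fun a =>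
    (ContinuousLinearMap.proj a : (Fin (k+1) → ℝ) →L[ℝ] ℝ).integrable_comp hsbint
  have hsbPE : ∀ a, ∀ᵐ ω ∂μ, |sb ω a| ≤ C * (p ω + e ω) := by
    intro a
    have hcomp : (fun ω => (μ[s|mG]) ω a) =ᵐ[μ] μ[fun ω => s ω a|mG] :=
      condexp_apply_ae hmG hsint a
    have habs : ∀ᵐ ω ∂μ, |(μ[fun ω => s ω a|mG]) ω| ≤ (μ[fun ω' => C * (Y ω' + e ω')|mG]) ω :=
      condexp_abs_le (hsa_int a) hDint (hsa_bd a)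
    rw [hsbEq]
    filter_upwards [hcomp, habs, hcondD] with ω h1 h2 h3
    rw [show (μ[s|mG]) ω a = (μ[fun ω => s ω a|mG]) ω from h1]
    exact h2.trans (le_of_eq h3)
  have hsb_bd : ∀ a, ∀ᵐ ω ∂μ, |sb ω a| ≤ 2 * C * q := by
    intro a
    filter_upwards [hsbPE a, hpq, heq] with ω h1 h2 h3
    have h4 : p ω + e ω ≤ 2 * q := by linarith
    calc |sb ω a| ≤ C * (p ω + e ω) := h1
      _ ≤ C * (2 * q) := mul_le_mul_of_nonneg_left h4 hCpos.le
      _ = 2 * C * q := by ring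
  have hconst_bd : ∀ (m' : MeasurableSpace Ω), m' ≤ m0 → ∀ a,
      ∀ᵐ ω ∂μ, |(μ[sb|m']) ω a| ≤ 2 * C * q := by
    intro m' hm' a
    letI : MeasurableSpace Ω := m0
    have hcomp : (fun ω => (μ[sb|m']) ω a) =ᵐ[μ] μ[fun ω => sb ω a|m'] :=
      condexp_apply_ae hm' hsbint a
    have habs : ∀ᵐ ω ∂μ, |(μ[fun ω => sb ω a|m']) ω| ≤ (μ[(fun _ => 2*C*q)|m']) ω :=
      condexp_abs_le (hsba_int a) (integrable_const _) (hsb_bd a)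
    have hcc : μ[(fun _ => 2*C*q)|m'] = fun _ => 2*C*q := condExp_const hm' _
    filter_upwards [hcomp, habs] with ω h1 h2
    rw [show (μ[sb|m']) ω a = (μ[fun ω => sb ω a|m']) ω from h1]
    refine h2.trans ?_
    rw [hcc]
  have hq2 : 2 * C * q * (2 * C * q) ≤ 16 * C ^ 4 * ρ ^ 2 := by
    have h1 : q ^ 2 ≤ (C * ρ) ^ 2 := pow_le_pow_left₀ hq0 hqρ 2
    have hX : (0:ℝ) ≤ C^4 * ρ^2 := by positivity
    nlinarith [mul_le_mul_of_nonneg_left h1 (by positivity : (0:ℝ) ≤ 4 * C^2)]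
  -- integral bounds
  have hIp : ∫ ω, p ω ∂μ ≤ C * ρ := by
    have h1 := integral_mono_ae hpint (integrable_const (C*ρ)) hpρ
    simpa using h1
  have hIY : ∫ ω, Y ω ∂μ ≤ C * ρ := by
    have h0 : ∫ ω, p ω ∂μ = ∫ ω, Y ω ∂μ := by rw [hpdef2]; exact integral_condExp hmG
    linarith
  have hIe : ∫ ω, e ω ∂μ ≤ C * ρ := by
    have h0 : ∫ ω, e ω ∂μ = ∫ ω, Y ω ∂μ := by rw [hedef2]; exact integral_condExp hmF
    linarith
  refine ⟨?_, ?_, ?_, ?_⟩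
  · -- Σ1c
    intro a b
    have hscEq : sbarcL μ h z W A X B V 1 = μ[sb|mC] := by rw [hsbdef, hmCdef]; rfl
    have hee : SigCL μ h z W A X B V a b
        = ∫ ω, sbarcL μ h z W A X B V 1 ω a * sbarcL μ h z W A X B V 1 ω b ∂μ := rfl
    rw [hee, hscEq]
    exact (integral_mul_le_const (hconst_bd mC hmC a) (hconst_bd mC hmC b)).trans hq2
  · -- Σ1p
    intro a b
    have hscEq : sbarpL μ h z W A X B V 1 = μ[sb|mP] := by rw [hsbdef, hmPdef]; rfl
    have hee : SigPL μ h z W A X B V a b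
        = ∫ ω, sbarpL μ h z W A X B V 1 ω a * sbarpL μ h z W A X B V 1 ω b ∂μ := rfl
    rw [hee, hscEq]
    exact (integral_mul_le_const (hconst_bd mP hmP a) (hconst_bd mP hmP b)).trans hq2
  · -- Σ2
    intro a b
    have hee : Sig2L μ h z W A X B V a b = ∫ ω, sb ω a * sb ω b ∂μ := rfl
    rw [hee]
    exact (integral_mul_le_const (hsb_bd a) (hsb_bd b)).trans hq2
  · -- Σ3
    intro a b
    have hee : Sig3L μ h z W A X B V a b
        = ∫ ω, (s ω a - sb ω a) * (s ω b - sb ω b) ∂μ := rfl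
    have hdiff_bd1 : ∀ c : Fin (k+1), ∀ᵐ ω ∂μ, |s ω c - sb ω c| ≤ 4 * C := by
      intro c
      filter_upwards [hsa_bd c, hsb_bd c, he1] with ω h1 h2 h3
      have hb1 : C * (Y ω + e ω) ≤ 2 * C := by nlinarith [hY1 ω, hCpos]
      have hb2 : 2 * C * q ≤ 2 * C := by nlinarith [hq1, hCpos]
      have habs : |s ω c - sb ω c| ≤ |s ω c| + |sb ω c| := abs_sub _ _
      linarith
    have hdiff_bd2 : ∀ c : Fin (k+1), ∀ᵐ ω ∂μ,
        |s ω c - sb ω c| ≤ C * (Y ω + 2 * e ω + p ω) := by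
      intro c
      filter_upwards [hsa_bd c, hsbPE c] with ω h1 h2
      have habs : |s ω c - sb ω c| ≤ |s ω c| + |sb ω c| := abs_sub _ _
      have hr : C * (Y ω + e ω) + C * (p ω + e ω) = C * (Y ω + 2 * e ω + p ω) := by ring
      linarith
    have hSum_int : Integrable (fun ω => Y ω + 2*e ω + p ω) μ :=
      (hYint.add (heint.const_mul 2)).add hpint
    have hDom : Integrable (fun ω => 4*C*(C*(Y ω + 2*e ω + p ω))) μ :=
      (hSum_int.const_mul C).const_mul (4*C)
    have hFmeas : AEStronglyMeasurable (fun ω => (s ω a - sb ω a) * (s ω b - sb ω b)) μ := by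
      have hc : ∀ c : Fin (k+1), Measurable (fun ω => s ω c - sb ω c) := fun c =>
        ((measurable_pi_apply c).comp hsmeas).sub ((measurable_pi_apply c).comp hsbSM.measurable)
      exact ((hc a).mul (hc b)).aestronglyMeasurable
    have hFbd : ∀ᵐ ω ∂μ, ‖(s ω a - sb ω a) * (s ω b - sb ω b)‖
        ≤ 4*C*(C*(Y ω + 2*e ω + p ω)) := by
      filter_upwards [hdiff_bd1 a, hdiff_bd2 b] with ω h1 h2
      rw [Real.norm_eq_abs, abs_mul]
      exact mul_le_mul h1 h2 (abs_nonneg _) (by positivity)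
    have hFint : Integrable (fun ω => (s ω a - sb ω a) * (s ω b - sb ω b)) μ :=
      Integrable.mono' hDom hFmeas hFbd
    have habs_int : |∫ ω, (s ω a - sb ω a) * (s ω b - sb ω b) ∂μ|
        ≤ ∫ ω, 4*C*(C*(Y ω + 2*e ω + p ω)) ∂μ := by
      calc |∫ ω, (s ω a - sb ω a) * (s ω b - sb ω b) ∂μ|
          = ‖∫ ω, (s ω a - sb ω a) * (s ω b - sb ω b) ∂μ‖ := (Real.norm_eq_abs _).symm
        _ ≤ ∫ ω, ‖(s ω a - sb ω a) * (s ω b - sb ω b)‖ ∂μ := norm_integral_le_integral_norm _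
        _ ≤ ∫ ω, 4*C*(C*(Y ω + 2*e ω + p ω)) ∂μ := integral_mono_ae hFint.norm hDom hFbd
    have hIval : ∫ ω, 4*C*(C*(Y ω + 2*e ω + p ω)) ∂μ ≤ 16 * C^3 * ρ := by
      have h2 : ∫ ω, 4*C*(C*(Y ω + 2*e ω + p ω)) ∂μ
          = 4*C*(C*((∫ ω, Y ω ∂μ) + 2*(∫ ω, e ω ∂μ) + ∫ ω, p ω ∂μ)) := by
        have hi1 : Integrable (fun ω => 2 * e ω) μ := heint.const_mul 2
        have hi2 : Integrable (fun ω => Y ω + 2 * e ω) μ := hYint.add hi1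
        rw [integral_const_mul, integral_const_mul, integral_add hi2 hpint,
          integral_add hYint hi1, integral_const_mul]
      rw [h2]
      have hT : (∫ ω, Y ω ∂μ) + 2*(∫ ω, e ω ∂μ) + (∫ ω, p ω ∂μ) ≤ 4*(C*ρ) := by linarith
      calc 4*C*(C*((∫ ω, Y ω ∂μ) + 2*(∫ ω, e ω ∂μ) + ∫ ω, p ω ∂μ))
          ≤ 4*C*(C*(4*(C*ρ))) :=
            mul_le_mul_of_nonneg_left (mul_le_mul_of_nonneg_left hT hCpos.le) (by positivity)
        _ = 16*C^3*ρ := by ring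
    rw [hee]
    refine habs_int.trans (hIval.trans ?_)
    have hX : (0:ℝ) ≤ 16*(C^3*ρ)*(C-1) := by
      have : (0:ℝ) ≤ C - 1 := by linarith
      positivity
    nlinarith [hX]

end SparseNet
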